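/- For every u in the Nehari manifold M_{λ,k}, the derivative of the fibering map E_{λ,k}(u) = J'_{λ,k}(u)u satisfies E'_{λ,k}(u)u ≤ −(q_- − p_+) ρ_1(u), where ρ_1(u) = ∫ ( |∇u|^{p(x)} + |u|^{p(x)} ) dx; in particular E'_{λ,k}(u)u < 0 on M_{λ,k}. -/

import Mathlib

open MeasureTheory Filter Topology

noncomputable section

/-- Euclidean space `ℝ^N`. -/
abbrev RN (N : ℕ) : Type := EuclideanSpace ℝ (Fin N)

/-- The point of `ℝ^N` with integer coordinates `z`. -/
def intPt {N : ℕ} (z : Fin N → ℤ) : RN N :=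
  (EuclideanSpace.equiv (Fin N) ℝ).symm fun i => (z i : ℝ)

/-- `ℤ^N`-periodicity of a function on `ℝ^N`. -/
def ZPeriodic {N : ℕ} (h : RN N → ℝ) : Prop :=
  ∀ (x : RN N) (z : Fin N → ℤ), h (x + intPt z) = h x

/-- The modular `ρ₁` of the variable exponent Sobolev space `W^{1,p(x)}(ℝ^N)`. -/
def rho1 {N : ℕ} (p : RN N → ℝ) (u : RN N → ℝ) : ℝ :=
  ∫ x, (‖gradient u x‖ ^ p x + |u x| ^ p x)

/-- Membership in the variable exponent Sobolev space `W^{1,p(x)}(ℝ^N)`. -/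
def memW {N : ℕ} (p : RN N → ℝ) (u : RN N → ℝ) : Prop :=
  Measurable u ∧ Integrable (fun x => ‖gradient u x‖ ^ p x + |u x| ^ p x) (volume : Measure (RN N))

/-- The Luxemburg-type norm of `W^{1,p(x)}(ℝ^N)`. -/
def WluxNorm {N : ℕ} (p : RN N → ℝ) (u : RN N → ℝ) : ℝ :=
  sInf {t : ℝ | 0 < t ∧ (∫ x, ((‖gradient u x‖ ^ p x + |u x| ^ p x) / t ^ p x)) ≤ 1}

/-- The energy functional `J_{λ,k}` associated with problem `(P_{λ,k})`. -/
def Jlk {N : ℕ} (p q r f g : RN N → ℝ) (lam : ℝ) (k : ℕ) (u : RN N → ℝ) : ℝ :=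
  (∫ x, (1 / p x) * (‖gradient u x‖ ^ p x + |u x| ^ p x))
    - lam * (∫ x, (g ((k : ℝ)⁻¹ • x) / q x) * |u x| ^ q x)
    - ∫ x, (f ((k : ℝ)⁻¹ • x) / r x) * |u x| ^ r x

/-- The Gâteaux derivative `J'_{λ,k}(u)v`. -/
def dJlk {N : ℕ} (p q r f g : RN N → ℝ) (lam : ℝ) (k : ℕ) (u v : RN N → ℝ) : ℝ :=
  (∫ x, (‖gradient u x‖ ^ (p x - 2) * (inner ℝ (gradient u x) (gradient v x) : ℝ)
      + |u x| ^ (p x - 2) * u x * v x))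
    - lam * (∫ x, g ((k : ℝ)⁻¹ • x) * |u x| ^ (q x - 2) * u x * v x)
    - ∫ x, f ((k : ℝ)⁻¹ • x) * |u x| ^ (r x - 2) * u x * v x

/-- The derivative `E'_{λ,k}(u)v` of the map `E_{λ,k}(u) = J'_{λ,k}(u)u`. -/
def dElk {N : ℕ} (p q r f g : RN N → ℝ) (lam : ℝ) (k : ℕ) (u v : RN N → ℝ) : ℝ :=
  (∫ x, p x * (‖gradient u x‖ ^ (p x - 2) * (inner ℝ (gradient u x) (gradient v x) : ℝ)
      + |u x| ^ (p x - 2) * u x * v x))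
    - lam * (∫ x, q x * (g ((k : ℝ)⁻¹ • x) * |u x| ^ (q x - 2) * u x * v x))
    - ∫ x, r x * (f ((k : ℝ)⁻¹ • x) * |u x| ^ (r x - 2) * u x * v x)

/-- The Nehari manifold `M_{λ,k}`. -/
def nehari {N : ℕ} (p q r f g : RN N → ℝ) (lam : ℝ) (k : ℕ) (u : RN N → ℝ) : Prop :=
  memW p u ∧ ¬ (u =ᵐ[(volume : Measure (RN N))] 0) ∧ dJlk p q r f g lam k u u = 0

/-- The Nehari level `c_{λ,k}`. -/
def clk {N : ℕ} (p q r f g : RN N → ℝ) (lam : ℝ) (k : ℕ) : ℝ :=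
  sInf ((Jlk p q r f g lam k) '' {u | nehari p q r f g lam k u})

/-- Limit-type functional with weight `w` in front of the `r(x)`-term. -/
def Jw {N : ℕ} (p r w : RN N → ℝ) (u : RN N → ℝ) : ℝ :=
  (∫ x, (1 / p x) * (‖gradient u x‖ ^ p x + |u x| ^ p x))
    - ∫ x, (w x / r x) * |u x| ^ r x

/-- Derivative of the limit-type functional. -/
def dJw {N : ℕ} (p r w : RN N → ℝ) (u v : RN N → ℝ) : ℝ :=
  (∫ x, (‖gradient u x‖ ^ (p x - 2) * (inner ℝ (gradient u x) (gradient v x) : ℝ)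
      + |u x| ^ (p x - 2) * u x * v x))
    - ∫ x, w x * |u x| ^ (r x - 2) * u x * v x

/-- Nehari manifold of the limit-type functional. -/
def nehariW {N : ℕ} (p r w : RN N → ℝ) (u : RN N → ℝ) : Prop :=
  memW p u ∧ ¬ (u =ᵐ[(volume : Measure (RN N))] 0) ∧ dJw p r w u u = 0

/-- Nehari level of the limit-type functional. -/
def cW {N : ℕ} (p r w : RN N → ℝ) : ℝ :=
  sInf ((Jw p r w) '' {u | nehariW p r w u})


lemma aux_pow_self (a c : ℝ) (ha : 0 ≤ a) (hc : 0 < c) :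
    a ^ (c - 2) * (a * a) = a ^ c := by
  rcases ha.eq_or_lt with h | h
  · rw [← h]
    simp [Real.zero_rpow hc.ne']
  · have h2 : a * a = a ^ (2:ℝ) := by
      rw [show ((2:ℝ)) = ((2:ℕ):ℝ) by norm_num, Real.rpow_natCast]; ring
    rw [h2, ← Real.rpow_add h]
    norm_num

/-- for `u ∈ M_{λ,k}` one has `E'_{λ,k}(u)u ≤ -(q₋ - p₊) ρ₁(u) < 0`. -/
theorem dElk_neg_on_nehari {N : ℕ} (p q r f g : RN N → ℝ) (lam : ℝ) (k : ℕ)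
    (pp qm rm rp : ℝ)
    (hpm : Measurable p) (hqm : Measurable q) (hrm : Measurable r)
    (hfc : Continuous f) (hgc : Continuous g)
    (hf0 : ∀ x, 0 ≤ f x) (hg0 : ∀ x, 0 ≤ g x) (hlam : 0 ≤ lam)
    (hp : ∀ᵐ x : RN N, 1 < p x ∧ p x ≤ pp) (hppqm : pp < qm) (hpp : 0 < pp)
    (hq : ∀ᵐ x : RN N, qm ≤ q x ∧ q x ≤ r x ∧ rm ≤ r x ∧ r x ≤ rp) (hqmrm : qm ≤ rm)
    (u : RN N → ℝ) (hu : nehari p q r f g lam k u)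
    (hig : Integrable (fun x => g ((k : ℝ)⁻¹ • x) * |u x| ^ q x) (volume : Measure (RN N)))
    (hif : Integrable (fun x => f ((k : ℝ)⁻¹ • x) * |u x| ^ r x) (volume : Measure (RN N))) :
    dElk p q r f g lam k u u ≤ -(qm - pp) * rho1 p u ∧ dElk p q r f g lam k u u < 0 := by
  classical
  obtain ⟨⟨hum, hint⟩, hune, hneh⟩ := hu
  set h : RN N → ℝ := fun x => ‖gradient u x‖ ^ p x + |u x| ^ p x with hh
  set G : RN N → ℝ := fun x => g ((k : ℝ)⁻¹ • x) * |u x| ^ q x with hG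
  set F : RN N → ℝ := fun x => f ((k : ℝ)⁻¹ • x) * |u x| ^ r x with hF
  have hnn : ∀ x, 0 ≤ h x := fun x =>
    add_nonneg (Real.rpow_nonneg (norm_nonneg _) _) (Real.rpow_nonneg (abs_nonneg _) _)
  have hGnn : ∀ x, 0 ≤ G x := fun x =>
    mul_nonneg (hg0 _) (Real.rpow_nonneg (abs_nonneg _) _)
  have hFnn : ∀ x, 0 ≤ F x := fun x =>
    mul_nonneg (hf0 _) (Real.rpow_nonneg (abs_nonneg _) _)
  have hq0' : 0 < qm := lt_trans hpp hppqm
  -- pointwise a.e. identifications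
  have eq1 : (fun x => ‖gradient u x‖ ^ (p x - 2) *
      (inner ℝ (gradient u x) (gradient u x) : ℝ)
      + |u x| ^ (p x - 2) * u x * u x) =ᵐ[(volume : Measure (RN N))] h := by
    filter_upwards [hp] with x hx
    have hpx : 0 < p x := lt_trans zero_lt_one hx.1
    have e1 : (inner ℝ (gradient u x) (gradient u x) : ℝ)
        = ‖gradient u x‖ * ‖gradient u x‖ := real_inner_self_eq_norm_mul_norm _
    have e2 : |u x| ^ (p x - 2) * u x * u x = |u x| ^ p x := by
      rw [mul_assoc, ← abs_mul_abs_self (u x)]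
      exact aux_pow_self _ _ (abs_nonneg _) hpx
    rw [e1, e2, aux_pow_self _ _ (norm_nonneg _) hpx]
  have eqG : (fun x => g ((k : ℝ)⁻¹ • x) * |u x| ^ (q x - 2) * u x * u x)
      =ᵐ[(volume : Measure (RN N))] G := by
    filter_upwards [hq] with x hx
    have hqx : 0 < q x := lt_of_lt_of_le hq0' hx.1
    have e2 : |u x| ^ (q x - 2) * (u x * u x) = |u x| ^ q x := by
      rw [← abs_mul_abs_self (u x)]
      exact aux_pow_self _ _ (abs_nonneg _) hqx
    show g ((k : ℝ)⁻¹ • x) * |u x| ^ (q x - 2) * u x * u x = G x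
    rw [hG, mul_assoc, mul_assoc, e2]
  have eqF : (fun x => f ((k : ℝ)⁻¹ • x) * |u x| ^ (r x - 2) * u x * u x)
      =ᵐ[(volume : Measure (RN N))] F := by
    filter_upwards [hq] with x hx
    have hrx : 0 < r x := lt_of_lt_of_le (lt_of_lt_of_le hq0' hx.1) hx.2.1
    have e2 : |u x| ^ (r x - 2) * (u x * u x) = |u x| ^ r x := by
      rw [← abs_mul_abs_self (u x)]
      exact aux_pow_self _ _ (abs_nonneg _) hrx
    show f ((k : ℝ)⁻¹ • x) * |u x| ^ (r x - 2) * u x * u x = F x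
    rw [hF, mul_assoc, mul_assoc, e2]
  have eq1' : (fun x => p x * (‖gradient u x‖ ^ (p x - 2) *
      (inner ℝ (gradient u x) (gradient u x) : ℝ)
      + |u x| ^ (p x - 2) * u x * u x)) =ᵐ[(volume : Measure (RN N))]
      (fun x => p x * h x) := by
    filter_upwards [eq1] with x hx
    rw [hx]
  have eqG' : (fun x => q x * (g ((k : ℝ)⁻¹ • x) * |u x| ^ (q x - 2) * u x * u x))
      =ᵐ[(volume : Measure (RN N))] (fun x => q x * G x) := by
    filter_upwards [eqG] with x hx
    rw [hx]
  have eqF' : (fun x => r x * (f ((k : ℝ)⁻¹ • x) * |u x| ^ (r x - 2) * u x * u x))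
      =ᵐ[(volume : Measure (RN N))] (fun x => r x * F x) := by
    filter_upwards [eqF] with x hx
    rw [hx]
  -- Nehari condition
  have hAeq : rho1 p u = lam * (∫ x, G x) + ∫ x, F x := by
    have hth := hneh
    unfold dJlk at hth
    rw [integral_congr_ae eq1, integral_congr_ae eqG, integral_congr_ae eqF] at hth
    unfold rho1
    linarith
  -- integrability
  have hmeash : AEStronglyMeasurable h (volume : Measure (RN N)) := hint.1
  have iph : Integrable (fun x => p x * h x) (volume : Measure (RN N)) := by
    refine Integrable.mono' (hint.const_mul pp) (hpm.aestronglyMeasurable.mul hmeash) ?_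
    filter_upwards [hp] with x hx
    rw [Real.norm_eq_abs, abs_of_nonneg (mul_nonneg (le_of_lt (lt_trans zero_lt_one hx.1)) (hnn x))]
    exact mul_le_mul_of_nonneg_right hx.2 (hnn x)
  have hmeasG : AEStronglyMeasurable G (volume : Measure (RN N)) := hig.1
  have hmeasF : AEStronglyMeasurable F (volume : Measure (RN N)) := hif.1
  have iqG : Integrable (fun x => q x * G x) (volume : Measure (RN N)) := by
    refine Integrable.mono' (hig.const_mul rp) (hqm.aestronglyMeasurable.mul hmeasG) ?_
    filter_upwards [hq] with x hx
    have hq0 : 0 ≤ q x := le_of_lt (lt_of_lt_of_le hq0' hx.1)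
    rw [Real.norm_eq_abs, abs_of_nonneg (mul_nonneg hq0 (hGnn x))]
    exact mul_le_mul_of_nonneg_right (le_trans hx.2.1 hx.2.2.2) (hGnn x)
  have irF : Integrable (fun x => r x * F x) (volume : Measure (RN N)) := by
    refine Integrable.mono' (hif.const_mul rp) (hrm.aestronglyMeasurable.mul hmeasF) ?_
    filter_upwards [hq] with x hx
    have hr0 : 0 ≤ r x := le_of_lt (lt_of_lt_of_le (lt_of_lt_of_le hq0' hx.1) hx.2.1)
    rw [Real.norm_eq_abs, abs_of_nonneg (mul_nonneg hr0 (hFnn x))]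
    exact mul_le_mul_of_nonneg_right hx.2.2.2 (hFnn x)
  -- inequalities
  have I1 : (∫ x, p x * h x) ≤ pp * rho1 p u := by
    have h1 : (∫ x, p x * h x) ≤ ∫ x, pp * h x := by
      refine integral_mono_ae iph (hint.const_mul pp) ?_
      filter_upwards [hp] with x hx
      exact mul_le_mul_of_nonneg_right hx.2 (hnn x)
    rwa [integral_const_mul] at h1
  have I2 : qm * (∫ x, G x) ≤ ∫ x, q x * G x := by
    have h1 : (∫ x, qm * G x) ≤ ∫ x, q x * G x := by
      refine integral_mono_ae (hig.const_mul qm) iqG ?_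
      filter_upwards [hq] with x hx
      exact mul_le_mul_of_nonneg_right hx.1 (hGnn x)
    rwa [integral_const_mul] at h1
  have I3 : qm * (∫ x, F x) ≤ ∫ x, r x * F x := by
    have h1 : (∫ x, qm * F x) ≤ ∫ x, r x * F x := by
      refine integral_mono_ae (hif.const_mul qm) irF ?_
      filter_upwards [hq] with x hx
      exact mul_le_mul_of_nonneg_right (le_trans hqmrm hx.2.2.1) (hFnn x)
    rwa [integral_const_mul] at h1
  have I2' : lam * (qm * (∫ x, G x)) ≤ lam * (∫ x, q x * G x) :=
    mul_le_mul_of_nonneg_left I2 hlam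
  -- main bound
  have hmain : dElk p q r f g lam k u u ≤ -(qm - pp) * rho1 p u := by
    unfold dElk
    rw [integral_congr_ae eq1', integral_congr_ae eqG', integral_congr_ae eqF']
    have hfin : pp * rho1 p u - lam * (qm * (∫ x, G x)) - qm * (∫ x, F x)
        = -(qm - pp) * rho1 p u := by
      rw [hAeq]; ring
    linarith
  -- positivity of rho1
  have hA0 : 0 ≤ rho1 p u := integral_nonneg hnn
  have hAne : rho1 p u ≠ 0 := by
    intro h0
    have hz : h =ᵐ[(volume : Measure (RN N))] 0 :=
      (integral_eq_zero_iff_of_nonneg hnn hint).mp h0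
    apply hune
    filter_upwards [hz, hp] with x hx hpx
    have hu0 : |u x| ^ p x = 0 := by
      have h1 : 0 ≤ ‖gradient u x‖ ^ p x := Real.rpow_nonneg (norm_nonneg _) _
      have h2 : 0 ≤ |u x| ^ p x := Real.rpow_nonneg (abs_nonneg _) _
      have h3 : ‖gradient u x‖ ^ p x + |u x| ^ p x = 0 := hx
      linarith
    by_contra hne
    have h4 : 0 < |u x| := abs_pos.mpr hne
    have h5 := Real.rpow_pos_of_pos h4 (p x)
    linarith
  have hApos : 0 < rho1 p u := lt_of_le_of_ne hA0 (Ne.symm hAne)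
  refine ⟨hmain, lt_of_le_of_lt hmain ?_⟩
  have h6 : 0 < (qm - pp) * rho1 p u := mul_pos (by linarith) hApos
  linarith
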